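/- There exist a two-letter alphabet Σ and regular languages S, B ⊆ Σ* with B ⊆ S and B extension closed with respect to S, together with a DFA M with 3 states whose accepted language is a failure explanation for S and B, such that every DFA whose accepted language is an early detection failure explanation for S and B has strictly more than 3 states. Hence a minimal failure-explanation DFA can be strictly smaller than every early-detection failure-explanation DFA. -/

import Mathlib

/-- `Pref L` is the set of prefixes of words of `L`. -/
def Pref {α : Type} (L : Set (List α)) : Set (List α) := {w | ∃ u, w ++ u ∈ L}

/-- `B` is extension closed with respect to `S`. -/
def ExtClosedWrt {α : Type} (S B : Set (List α)) : Prop :=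
  ∀ w ∈ B, ∀ u : List α, w ++ u ∈ S → w ++ u ∈ B

/-- `L` is a failure explanation for `S` and `B`. -/
def IsFE {α : Type} (S B L : Set (List α)) : Prop := B ⊆ L ∧ L ∩ (S \ B) = ∅

/-- `L` is an early detection failure explanation for `S` and `B`. -/
def IsEDFE {α : Type} (S B L : Set (List α)) : Prop :=
  IsFE S B L ∧ ∀ w, w ∈ Pref B → w ∉ Pref (S \ B) → w ∈ L

/-- `L` is a regular language: some DFA with finitely many states accepts exactly `L`. -/
def Regular {α : Type} (L : Set (List α)) : Prop :=
  ∃ (σ : Type) (_ : Fintype σ) (M : DFA α σ), ∀ w, w ∈ M.accepts ↔ w ∈ L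

/- ### Auxiliary construction.
We use the alphabet `Bool` with `a = false`, `b = true`, and the languages
`S₀ = {a, b, aab, aaab}` and `B₀ = {aaab}`. -/

/-- The language `S₀ = {a, b, aab, aaab}`. -/
def S0 : Set (List Bool) := fun w =>
  w = [false] ∨ w = [true] ∨ w = [false, false, true] ∨ w = [false, false, false, true]

/-- The language `B₀ = {aaab}`. -/
def B0 : Set (List Bool) := fun w => w = [false, false, false, true]

/-- States for a DFA recognizing `S0`. -/
inductive SSt : Type
  | s0 | s1 | s2 | s3 | sl | sd
  deriving DecidableEq

instance : Fintype SSt := ⟨{.s0, .s1, .s2, .s3, .sl, .sd}, fun x => by cases x <;> simp⟩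

/-- A DFA recognizing `S0`. -/
def MS : DFA Bool SSt where
  step s c :=
    match s, c with
    | .s0, false => .s1
    | .s0, true => .sl
    | .s1, false => .s2
    | .s1, true => .sd
    | .s2, false => .s3
    | .s2, true => .sl
    | .s3, false => .sd
    | .s3, true => .sl
    | .sl, _ => .sd
    | .sd, _ => .sd
  start := .s0
  accept := fun s => s = .s1 ∨ s = .sl

/-- Residual languages of the states of `MS`. -/
def LangS : SSt → List Bool → Prop
  | .s0 => fun w =>
      w = [false] ∨ w = [true] ∨ w = [false, false, true] ∨ w = [false, false, false, true]
  | .s1 => fun w => w = [] ∨ w = [false, true] ∨ w = [false, false, true]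
  | .s2 => fun w => w = [true] ∨ w = [false, true]
  | .s3 => fun w => w = [true]
  | .sl => fun w => w = []
  | .sd => fun _ => False

lemma set_mem_def' {α : Type} {a : α} {s : Set α} : a ∈ s ↔ s a := Iff.rfl

lemma MS_evalFrom : ∀ (w : List Bool) (s : SSt),
    (MS.evalFrom s w ∈ MS.accept ↔ LangS s w) := by
  intro w
  induction w with
  | nil =>
    intro s
    cases s <;> (simp only [DFA.evalFrom_nil]; rw [set_mem_def']; simp [MS, LangS])
  | cons c w ih =>
    intro s
    have h1 : MS.evalFrom s (c :: w) = MS.evalFrom (MS.step s c) w := rfl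
    rw [h1, ih]
    cases s <;> cases c <;> simp [MS, LangS, or_comm]

lemma MS_correct : ∀ w, w ∈ MS.accepts ↔ w ∈ S0 := fun w => MS_evalFrom w .s0

/-- States for a DFA recognizing `B0`. -/
inductive TSt : Type
  | t0 | t1 | t2 | t3 | t4 | td
  deriving DecidableEq

instance : Fintype TSt := ⟨{.t0, .t1, .t2, .t3, .t4, .td}, fun x => by cases x <;> simp⟩

/-- A DFA recognizing `B0`. -/
def MB : DFA Bool TSt where
  step s c :=
    match s, c with
    | .t0, false => .t1
    | .t1, false => .t2
    | .t2, false => .t3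
    | .t3, true => .t4
    | _, _ => .td
  start := .t0
  accept := fun s => s = .t4

/-- Residual languages of the states of `MB`. -/
def LangB : TSt → List Bool → Prop
  | .t0 => fun w => w = [false, false, false, true]
  | .t1 => fun w => w = [false, false, true]
  | .t2 => fun w => w = [false, true]
  | .t3 => fun w => w = [true]
  | .t4 => fun w => w = []
  | .td => fun _ => False

lemma MB_evalFrom : ∀ (w : List Bool) (s : TSt),
    (MB.evalFrom s w ∈ MB.accept ↔ LangB s w) := by
  intro w
  induction w with
  | nil =>
    intro s
    cases s <;> (simp only [DFA.evalFrom_nil]; rw [set_mem_def']; simp [MB, LangB])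
  | cons c w ih =>
    intro s
    have h1 : MB.evalFrom s (c :: w) = MB.evalFrom (MB.step s c) w := rfl
    rw [h1, ih]
    cases s <;> cases c <;> simp [MB, LangB]

lemma MB_correct : ∀ w, w ∈ MB.accepts ↔ w ∈ B0 := fun w => MB_evalFrom w .t0

/-- The 3-state DFA accepting words of even length (third state unused). -/
def MFE : DFA Bool (Fin 3) where
  step s _ := if s = 0 then 1 else 0
  start := 0
  accept := fun s => s = 0

/-- Two words with the same `eval` accept the same extensions. -/
lemma eval_eq_accept_iff {τ : Type} (N : DFA Bool τ) {x y : List Bool}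
    (h : N.eval x = N.eval y) (u : List Bool) :
    (x ++ u ∈ N.accepts ↔ y ++ u ∈ N.accepts) := by
  rw [DFA.mem_accepts, DFA.mem_accepts]
  show N.evalFrom N.start (x ++ u) ∈ N.accept ↔ N.evalFrom N.start (y ++ u) ∈ N.accept
  rw [DFA.evalFrom_of_append, DFA.evalFrom_of_append]
  show N.evalFrom (N.eval x) u ∈ N.accept ↔ N.evalFrom (N.eval y) u ∈ N.accept
  rw [h]

/-- There is a two-letter alphabet with regular `S`, `B` (with `B ⊆ S` extension closed
w.r.t. `S`) such that some 3-state DFA accepts a failure explanation, while every DFA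
accepting an early detection failure explanation has strictly more than 3 states. -/
theorem stmt13 :
    ∃ (α : Type) (instα : Fintype α), @Fintype.card α instα = 2 ∧
      ∃ S B : Set (List α),
        B ⊆ S ∧ ExtClosedWrt S B ∧ Regular S ∧ Regular B ∧
        (∃ M : DFA α (Fin 3), IsFE S B {w | w ∈ M.accepts}) ∧
        (∀ (τ : Type) [Fintype τ], ∀ N : DFA α τ,
          IsEDFE S B {w | w ∈ N.accepts} → 3 < Fintype.card τ) := by
  refine ⟨Bool, inferInstance, by simp, S0, B0, ?_, ?_, ?_, ?_, ?_, ?_⟩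
  · -- B0 ⊆ S0
    intro w hw
    exact Or.inr (Or.inr (Or.inr hw))
  · -- extension closed
    intro w hw u hu
    have hw' : w = [false, false, false, true] := hw
    subst hw'
    rcases hu with h | h | h | h
    · simp at h
    · simp at h
    · simp at h
    · have hu0 : u = [] := by simpa using h
      subst hu0
      exact hw
  · exact ⟨SSt, inferInstance, MS, MS_correct⟩
  · exact ⟨TSt, inferInstance, MB, MB_correct⟩
  · -- the 3-state FE
    refine ⟨MFE, ?_, ?_⟩
    · intro w hw
      have hw' : w = [false, false, false, true] := hw
      subst hw'
      show MFE.eval [false, false, false, true] = 0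
      decide
    · rw [Set.eq_empty_iff_forall_notMem]
      rintro w ⟨hL, hS, hB⟩
      rcases hS with h | h | h | h
      · subst h
        exact (show MFE.eval [false] ≠ 0 by decide) hL
      · subst h
        exact (show MFE.eval [true] ≠ 0 by decide) hL
      · subst h
        exact (show MFE.eval [false, false, true] ≠ 0 by decide) hL
      · exact hB h
  · -- every EDFE needs more than 3 states
    intro τ _ N hN
    -- forced memberships
    have hB_in : [false, false, false, true] ∈ N.accepts := hN.1.1 rfl
    have h_aaa : [false, false, false] ∈ N.accepts := by
      refine hN.2 [false, false, false] ⟨[true], rfl⟩ ?_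
      rintro ⟨u, hu, hnb⟩
      rcases hu with h | h | h | h
      · simp at h
      · simp at h
      · simp at h
      · have hu0 : u = [true] := by simpa using h
        subst hu0
        exact hnb rfl
    have hout : ∀ w : List Bool, w ∈ S0 → w ∉ B0 → w ∉ N.accepts := by
      intro w hS hB hacc
      have h2 := hN.1.2
      have hw : w ∈ ({w | w ∈ N.accepts} ∩ (S0 \ B0)) := ⟨hacc, hS, hB⟩
      rw [h2] at hw
      exact hw
    have h_a : [false] ∉ N.accepts :=
      hout [false] (Or.inl rfl) (by intro h; simp [B0, set_mem_def'] at h)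
    have h_b : [true] ∉ N.accepts :=
      hout [true] (Or.inr (Or.inl rfl)) (by intro h; simp [B0, set_mem_def'] at h)
    have h_aab : [false, false, true] ∉ N.accepts :=
      hout [false, false, true] (Or.inr (Or.inr (Or.inl rfl)))
        (by intro h; simp [B0, set_mem_def'] at h)
    -- a helper to derive contradictions from equal states
    have key : ∀ (x y u : List Bool), N.eval x = N.eval y →
        x ++ u ∈ N.accepts → y ++ u ∉ N.accepts → False := by
      intro x y u h hx hy
      exact hy ((eval_eq_accept_iff N h u).mp hx)
    set e0 := N.eval ([] : List Bool) with he0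
    set e1 := N.eval [false] with he1
    set e2 := N.eval [false, false] with he2
    set e3 := N.eval [false, false, false] with he3
    have d01 : e0 ≠ e1 := fun h =>
      key [false] [] [false, false, true] h.symm hB_in h_aab
    have d02 : e0 ≠ e2 := fun h =>
      key [false, false] [] [false] h.symm h_aaa h_a
    have d03 : e0 ≠ e3 := fun h =>
      key [false, false, false] [] [true] h.symm hB_in h_b
    have d12 : e1 ≠ e2 := fun h =>
      key [false, false] [false] [false, true] h.symm hB_in h_aab
    have d13 : e1 ≠ e3 := fun h =>
      key [false, false, false] [false] [] h.symm h_aaa h_a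
    have d23 : e2 ≠ e3 := fun h =>
      key [false, false, false] [false, false] [true] h.symm hB_in h_aab
    -- four distinct states give at least four states
    letI : DecidableEq τ := Classical.decEq τ
    have hcard : ({e0, e1, e2, e3} : Finset τ).card = 4 := by
      rw [Finset.card_insert_of_notMem (by simp [d01, d02, d03]),
        Finset.card_insert_of_notMem (by simp [d12, d13]),
        Finset.card_insert_of_notMem (by simp [d23]),
        Finset.card_singleton]
    have hle : ({e0, e1, e2, e3} : Finset τ).card ≤ Fintype.card τ := by
      rw [← Finset.card_univ]
      exact Finset.card_le_card (Finset.subset_univ _)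
    omega
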